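/- arXiv:1805.11454 — 2 statements merged into one kernel-verified Lean document; each statement's English description precedes it below -/
import Mathlib

section
/- Let p ≥ 1, L > 0, σ > 0, a ≥ 0, and let φ : ℝ^p → ℝ^p be L-Lipschitz. Let c and g be independent random vectors in ℝ^p with finite second moments, with E[g] = m and E[‖g − m‖²] ≤ σ². Then E[⟨φ(c − a·g), m − g⟩] ≤ a·L·σ². -/
open MeasureTheory ProbabilityTheory
open scoped RealInnerProductSpace

private lemma lipAux {Ω : Type*} [MeasurableSpace Ω] {P : Measure Ω} [IsProbabilityMeasure P]
    {p : ℕ} {φ : EuclideanSpace ℝ (Fin p) → EuclideanSpace ℝ (Fin p)} {K : NNReal}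
    (hφ : LipschitzWith K φ) {f : Ω → EuclideanSpace ℝ (Fin p)} (hf : MemLp f 2 P) :
    MemLp (fun ω => φ (f ω)) 2 P := by
  have h1 : LipschitzWith K (fun x => φ x - φ 0) := by intro x y; simpa using hφ x y
  have h2 := h1.comp_memLp (by simp) hf
  have : (fun ω => φ (f ω)) = (fun ω => (φ (f ω) - φ 0)) + fun _ => φ 0 := by funext ω; simp
  rw [this]; exact h2.add (memLp_const _)

private lemma innerInt {Ω : Type*} [MeasurableSpace Ω] {P : Measure Ω} {p : ℕ}
    {f g : Ω → EuclideanSpace ℝ (Fin p)} (hf : MemLp f 2 P) (hg : MemLp g 2 P) :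
    Integrable (fun ω => ⟪f ω, g ω⟫) P := by
  have := L2.integrable_inner (𝕜 := ℝ) (hf.toLp f) (hg.toLp g)
  refine this.congr ?_
  filter_upwards [hf.coeFn_toLp, hg.coeFn_toLp] with ω h1 h2
  rw [h1, h2]

theorem stmt17 (p : ℕ) (hp : 1 ≤ p) (L σ a : ℝ) (hL : 0 < L) (hσ : 0 < σ) (ha : 0 ≤ a)
    (φ : EuclideanSpace ℝ (Fin p) → EuclideanSpace ℝ (Fin p))
    (hφ : LipschitzWith (Real.toNNReal L) φ)
    {Ω : Type*} [MeasurableSpace Ω] (P : Measure Ω) [IsProbabilityMeasure P]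
    (c g : Ω → EuclideanSpace ℝ (Fin p))
    (hindep : IndepFun c g P)
    (hcL2 : MemLp c 2 P) (hgL2 : MemLp g 2 P)
    (m : EuclideanSpace ℝ (Fin p))
    (hmean : ∫ ω, g ω ∂P = m)
    (hvar : ∫ ω, ‖g ω - m‖ ^ 2 ∂P ≤ σ ^ 2) :
    (∫ ω, ⟪φ (c ω - a • g ω), m - g ω⟫ ∂P) ≤ a * L * σ ^ 2 := by
  set ψ : Ω → EuclideanSpace ℝ (Fin p) := fun ω => φ (c ω - a • m) with hψdef
  set h : Ω → EuclideanSpace ℝ (Fin p) := fun ω => φ (c ω - a • g ω) with hhdef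
  set q : Ω → EuclideanSpace ℝ (Fin p) := fun ω => m - g ω with hqdef
  have hgInt : Integrable g P := hgL2.integrable one_le_two
  have hψL2 : MemLp ψ 2 P := lipAux hφ (hcL2.sub (memLp_const _))
  have hhL2 : MemLp h 2 P := lipAux hφ (hcL2.sub (hgL2.const_smul a))
  have hqL2 : MemLp q 2 P := (memLp_const m).sub hgL2
  -- zero mean part
  have hzero : ∫ ω, ⟪ψ ω, q ω⟫ ∂P = 0 := by
    have hXint : ∀ i : Fin p, Integrable (fun ω => ψ ω i) P := fun i =>
      (EuclideanSpace.proj i : EuclideanSpace ℝ (Fin p) →L[ℝ] ℝ).integrable_comp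
        (hψL2.integrable one_le_two)
    have hYint : ∀ i : Fin p, Integrable (fun ω => q ω i) P := fun i =>
      (EuclideanSpace.proj i : EuclideanSpace ℝ (Fin p) →L[ℝ] ℝ).integrable_comp
        (hqL2.integrable one_le_two)
    have hInd : ∀ i : Fin p, IndepFun (fun ω => ψ ω i) (fun ω => q ω i) P := by
      intro i
      have m1 : Measurable (fun x : EuclideanSpace ℝ (Fin p) => φ (x - a • m) i) :=
        ((EuclideanSpace.proj i).continuous.comp
          (hφ.continuous.comp (continuous_id.sub continuous_const))).measurable
      have m2 : Measurable (fun y : EuclideanSpace ℝ (Fin p) => m i - y i) :=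
        (continuous_const.sub (EuclideanSpace.proj i).continuous).measurable
      exact hindep.comp m1 m2
    have hYmean : ∀ i : Fin p, ∫ ω, q ω i ∂P = 0 := by
      intro i
      have := (EuclideanSpace.proj i : EuclideanSpace ℝ (Fin p) →L[ℝ] ℝ).integral_comp_comm hgInt
      have hgi : ∫ ω, g ω i ∂P = m i := by
        simpa [hmean] using this
      have hgiInt : Integrable (fun ω => g ω i) P :=
        (EuclideanSpace.proj i : EuclideanSpace ℝ (Fin p) →L[ℝ] ℝ).integrable_comp hgInt
      rw [show (fun ω => q ω i) = fun ω => m i - g ω i from rfl,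
        integral_sub (integrable_const _) hgiInt, hgi, integral_const]
      simp
    calc ∫ ω, ⟪ψ ω, q ω⟫ ∂P = ∫ ω, ∑ i : Fin p, ψ ω i * q ω i ∂P := by
          refine integral_congr_ae (Filter.Eventually.of_forall fun ω => ?_)
          simp [PiLp.inner_apply, RCLike.inner_apply]
          exact Finset.sum_congr rfl fun i _ => mul_comm _ _
      _ = ∑ i : Fin p, ∫ ω, ψ ω i * q ω i ∂P := by
          exact integral_finset_sum _ fun i _ => (hInd i).integrable_mul (hXint i) (hYint i)
      _ = 0 := by
          refine Finset.sum_eq_zero fun i _ => ?_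
          have hh := (hInd i).integral_fun_mul_eq_mul_integral (hXint i).1 (hYint i).1
          rw [hYmean i, mul_zero] at hh
          exact hh
  -- difference bound
  have hgm2int : Integrable (fun ω => ‖g ω - m‖ ^ 2) P := by
    have := innerInt (hgL2.sub (memLp_const m)) (hgL2.sub (memLp_const m))
    refine this.congr (Filter.Eventually.of_forall fun ω => ?_)
    simp only [Pi.sub_apply]
    rw [real_inner_self_eq_norm_sq]
  have hAint : Integrable (fun ω => ⟪h ω - ψ ω, q ω⟫) P := innerInt (hhL2.sub hψL2) hqL2
  have hAbound : ∀ ω, ⟪h ω - ψ ω, q ω⟫ ≤ a * L * ‖g ω - m‖ ^ 2 := by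
    intro ω
    have h1 : ⟪h ω - ψ ω, q ω⟫ ≤ ‖h ω - ψ ω‖ * ‖q ω‖ := real_inner_le_norm _ _
    have h2 : ‖h ω - ψ ω‖ ≤ L * (a * ‖q ω‖) := by
      have := hφ.dist_le_mul (c ω - a • g ω) (c ω - a • m)
      rw [dist_eq_norm] at this
      have heq : (c ω - a • g ω) - (c ω - a • m) = a • (m - g ω) := by
        rw [smul_sub]; abel
      calc ‖h ω - ψ ω‖ ≤ (Real.toNNReal L : ℝ) * ‖(c ω - a • g ω) - (c ω - a • m)‖ := this
        _ = L * (a * ‖q ω‖) := by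
            rw [heq, norm_smul, Real.coe_toNNReal _ hL.le, Real.norm_eq_abs, abs_of_nonneg ha]
    have hq2 : ‖q ω‖ = ‖g ω - m‖ := norm_sub_rev m (g ω)
    calc ⟪h ω - ψ ω, q ω⟫ ≤ L * (a * ‖q ω‖) * ‖q ω‖ :=
          h1.trans (mul_le_mul_of_nonneg_right h2 (norm_nonneg _))
      _ = a * L * ‖g ω - m‖ ^ 2 := by rw [hq2]; ring
  have hsplit : (fun ω => ⟪h ω, q ω⟫) = fun ω => ⟪h ω - ψ ω, q ω⟫ + ⟪ψ ω, q ω⟫ := by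
    funext ω; rw [inner_sub_left]; ring
  calc (∫ ω, ⟪h ω, q ω⟫ ∂P)
      = (∫ ω, ⟪h ω - ψ ω, q ω⟫ ∂P) + ∫ ω, ⟪ψ ω, q ω⟫ ∂P := by
        rw [hsplit, integral_add hAint (innerInt hψL2 hqL2)]
    _ = ∫ ω, ⟪h ω - ψ ω, q ω⟫ ∂P := by rw [hzero, add_zero]
    _ ≤ ∫ ω, a * L * ‖g ω - m‖ ^ 2 ∂P :=
        integral_mono hAint (hgm2int.const_mul _) hAbound
    _ = a * L * ∫ ω, ‖g ω - m‖ ^ 2 ∂P := integral_const_mul _ _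
    _ ≤ a * L * σ ^ 2 := by
        exact mul_le_mul_of_nonneg_left hvar (mul_nonneg ha hL.le)
end

section
/- Let n ≥ 1, p ≥ 1, σ > 0, and let W ∈ ℝ^{n×n} be a nonnegative doubly stochastic matrix. Let g_1, …, g_n be independent random vectors in ℝ^p with finite second moments, with E[g_i] = m_i and E[‖g_i − m_i‖²] ≤ σ² for each i. Let G ∈ ℝ^{n×p} be the random matrix with rows g_i, M ∈ ℝ^{n×p} the matrix with rows m_i, and ḡ := (1/n)∑_{i=1}^n g_i. Then ∑_{i=1}^n E[⟨(WG)_i − ḡ, m_i − g_i⟩] ≤ σ², where (WG)_i = ∑_{j=1}^n w_{ij} g_j denotes the i-th row of WG. -/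
open MeasureTheory ProbabilityTheory Matrix
open scoped RealInnerProductSpace

section Aux

variable {α : Type*} [MeasurableSpace α] {μ : Measure α}

lemma memLp2_integrable_inner {E : Type*} [NormedAddCommGroup E] [InnerProductSpace ℝ E]
    {f g : α → E} (hf : MemLp f 2 μ) (hg : MemLp g 2 μ) :
    Integrable (fun x => ⟪f x, g x⟫) μ := by
  have h := MeasureTheory.L2.integrable_inner (𝕜 := ℝ) (hf.toLp f) (hg.toLp g)
  apply h.congr
  filter_upwards [hf.coeFn_toLp, hg.coeFn_toLp] with x h1 h2
  rw [h1, h2]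

end Aux

theorem stmt18 (n p : ℕ) (hn : 1 ≤ n) (hp : 1 ≤ p) (σ : ℝ) (hσ : 0 < σ)
    (W : Matrix (Fin n) (Fin n) ℝ)
    (hWnonneg : ∀ i j, 0 ≤ W i j)
    (hWrow : W.mulVec (fun _ => (1 : ℝ)) = fun _ => (1 : ℝ))
    (hWcol : Matrix.vecMul (fun _ => (1 : ℝ)) W = fun _ => (1 : ℝ))
    {Ω : Type*} [MeasurableSpace Ω] (P : Measure Ω) [IsProbabilityMeasure P]
    (g : Fin n → Ω → EuclideanSpace ℝ (Fin p))
    (hindep : iIndepFun g P)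
    (hL2 : ∀ i, MemLp (g i) 2 P)
    (m : Fin n → EuclideanSpace ℝ (Fin p))
    (hmean : ∀ i, ∫ ω, g i ω ∂P = m i)
    (hvar : ∀ i, ∫ ω, ‖g i ω - m i‖ ^ 2 ∂P ≤ σ ^ 2) :
    (∑ i, ∫ ω, ⟪(∑ j, W i j • g j ω) - (n : ℝ)⁻¹ • ∑ j, g j ω, m i - g i ω⟫ ∂P) ≤ σ ^ 2 := by
  have hint1 : ∀ i, Integrable (g i) P := fun i => (hL2 i).integrable one_le_two
  have hL2' : ∀ i, MemLp (fun ω => m i - g i ω) 2 P := fun i =>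
    (memLp_const (m i)).sub (hL2 i)
  -- integrability of the inner products
  have hIint : ∀ i j, Integrable (fun ω => ⟪g j ω, m i - g i ω⟫) P := fun i j =>
    memLp2_integrable_inner (hL2 j) (hL2' i)
  -- the variance values
  set v : Fin n → ℝ := fun i => ∫ ω, ‖g i ω - m i‖ ^ 2 ∂P with hv
  have hv0 : ∀ i, 0 ≤ v i := fun i => integral_nonneg (fun ω => by positivity)
  -- ∫ (m i - g i) = 0
  have hmg : ∀ i, ∫ ω, (m i - g i ω) ∂P = 0 := by
    intro i
    rw [integral_sub (integrable_const _) (hint1 i), integral_const, hmean i]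
    simp
  -- the diagonal expectation
  have hdiag : ∀ i, ∫ ω, ⟪g i ω, m i - g i ω⟫ ∂P = -(v i) := by
    intro i
    have hpt : ∀ ω, ⟪g i ω, m i - g i ω⟫
        = ⟪m i, m i - g i ω⟫ - ‖g i ω - m i‖ ^ 2 := by
      intro ω
      have : ⟪g i ω - m i, m i - g i ω⟫ = -‖g i ω - m i‖ ^ 2 := by
        rw [show m i - g i ω = -(g i ω - m i) from (neg_sub _ _).symm, inner_neg_right,
          real_inner_self_eq_norm_sq]
      calc ⟪g i ω, m i - g i ω⟫ = ⟪m i + (g i ω - m i), m i - g i ω⟫ := by congr 1; abel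
        _ = ⟪m i, m i - g i ω⟫ + ⟪g i ω - m i, m i - g i ω⟫ := inner_add_left _ _ _
        _ = ⟪m i, m i - g i ω⟫ - ‖g i ω - m i‖ ^ 2 := by rw [this]; ring
    simp_rw [hpt]
    have hsub : Integrable (fun ω => m i - g i ω) P := (integrable_const (m i)).sub (hint1 i)
    have hintc : Integrable (fun ω => ⟪m i, m i - g i ω⟫) P := hsub.const_inner _
    have hintn : Integrable (fun ω => ‖g i ω - m i‖ ^ 2) P := by
      have := memLp2_integrable_inner ((hL2 i).sub (memLp_const (m i)))
        ((hL2 i).sub (memLp_const (m i)))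
      apply this.congr
      filter_upwards with ω using real_inner_self_eq_norm_sq _
    rw [integral_sub hintc hintn, integral_inner hsub, hmg i]
    simp [hv]
  -- off-diagonal expectations vanish
  have hoff : ∀ i j, j ≠ i → ∫ ω, ⟪g j ω, m i - g i ω⟫ ∂P = 0 := by
    intro i j hji
    have hptI : ∀ ω, ⟪g j ω, m i - g i ω⟫
        = ∑ k, (g j ω k) * (m i k - g i ω k) := by
      intro ω
      simp [PiLp.inner_apply, RCLike.inner_apply, PiLp.sub_apply, mul_comm]
    simp_rw [hptI]
    have hXint : ∀ (l : Fin n) (k : Fin p), Integrable (fun ω => g l ω k) P := by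
      intro l k
      have : Integrable (fun ω => ⟪(EuclideanSpace.single k (1:ℝ)), g l ω⟫) P :=
        (hint1 l).const_inner _
      apply this.congr
      filter_upwards with ω
      rw [EuclideanSpace.inner_single_left]
      simp
    have hYint : ∀ k, Integrable (fun ω => m i k - g i ω k) P := fun k =>
      (integrable_const _).sub (hXint i k)
    have hindij : IndepFun (g j) (g i) P := hindep.indepFun hji
    have hmeas : ∀ k, Measurable (fun x : EuclideanSpace ℝ (Fin p) => x k) := fun k =>
      (measurable_pi_apply k).comp (WithLp.measurable_ofLp 2 _)
    have hprod : ∀ k, Integrable (fun ω => (g j ω k) * (m i k - g i ω k)) P := by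
      intro k
      exact (hindij.comp (hmeas k) (measurable_const.sub (hmeas k))).integrable_mul
        (hXint j k) (hYint k)
    rw [integral_finset_sum _ (fun k _ => hprod k)]
    have hYzero : ∀ k, ∫ ω, (m i k - g i ω k) ∂P = 0 := by
      intro k
      have hco : ∫ ω, g i ω k ∂P = m i k := by
        have := (EuclideanSpace.proj k (𝕜 := ℝ)).integral_comp_comm (hint1 i)
        simpa [hmean i] using this
      rw [integral_sub (integrable_const _) (hXint i k), integral_const, hco]
      simp
    refine Finset.sum_eq_zero (fun k _ => ?_)
    have h := (hindij.comp (hmeas k) (measurable_const.sub (hmeas k))).integral_mul_eq_mul_integral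
      (hXint j k).aestronglyMeasurable (hYint k).aestronglyMeasurable
    simp only [Function.comp_def] at h
    have h' : ∫ a, g j a k * (m i k - g i a k) ∂P
        = (∫ x, g j x k ∂P) * ∫ x, m i k - g i x k ∂P := h
    rw [h', hYzero k, mul_zero]
  -- rewrite each integral
  have hrw : ∀ i, ∫ ω, ⟪(∑ j, W i j • g j ω) - (n : ℝ)⁻¹ • ∑ j, g j ω, m i - g i ω⟫ ∂P
      = ((n : ℝ)⁻¹ - W i i) * v i := by
    intro i
    have hpt : ∀ ω, ⟪(∑ j, W i j • g j ω) - (n : ℝ)⁻¹ • ∑ j, g j ω, m i - g i ω⟫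
        = ∑ j, (W i j - (n : ℝ)⁻¹) * ⟪g j ω, m i - g i ω⟫ := by
      intro ω
      rw [Finset.smul_sum, ← Finset.sum_sub_distrib, sum_inner]
      congr 1; ext j
      rw [← sub_smul, real_inner_smul_left]
    simp_rw [hpt]
    rw [integral_finset_sum _ (fun j _ => (hIint i j).const_mul _)]
    rw [Finset.sum_eq_single i]
    · rw [integral_const_mul, hdiag i]; ring
    · intro j _ hji
      rw [integral_const_mul, hoff i j hji, mul_zero]
    · intro h; exact absurd (Finset.mem_univ i) h
  calc (∑ i, ∫ ω, ⟪(∑ j, W i j • g j ω) - (n : ℝ)⁻¹ • ∑ j, g j ω, m i - g i ω⟫ ∂P)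
      = ∑ i, ((n : ℝ)⁻¹ - W i i) * v i := by simp_rw [hrw]
    _ ≤ ∑ _i : Fin n, (n : ℝ)⁻¹ * σ ^ 2 := by
        refine Finset.sum_le_sum (fun i _ => ?_)
        calc ((n : ℝ)⁻¹ - W i i) * v i ≤ (n : ℝ)⁻¹ * v i := by
              apply mul_le_mul_of_nonneg_right _ (hv0 i)
              linarith [hWnonneg i i]
          _ ≤ (n : ℝ)⁻¹ * σ ^ 2 := by
              apply mul_le_mul_of_nonneg_left (hvar i) (by positivity)
    _ = σ ^ 2 := by
        rw [Finset.sum_const, Finset.card_univ, Fintype.card_fin, nsmul_eq_mul]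
        field_simp
end
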